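/- Let $0 < p, q \le 1$, let $X$ be a $p$-normed space and $Y$ a $q$-normed space. Let $\Gamma$ be a set, and for each $\gamma \in \Gamma$ let $f_\gamma : X \to Y$ be an $L$-Lipschitz map. Suppose that the sets $\operatorname{supp}_0(f_\gamma) = f_\gamma^{-1}(Y \setminus \{0\})$ are pairwise disjoint. Then the map $f = \sum_{\gamma \in \Gamma} f_\gamma$ (which is pointwise a finite sum) is well-defined and $L \cdot 2^{1/q - 1}$-Lipschitz. -/

import Mathlib

lemma aux_pm (q : ℝ) (hq : 0 < q) (hq1 : q ≤ 1) {A B : ℝ} (hA : 0 ≤ A) (hB : 0 ≤ B) :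
    (A ^ q + B ^ q) ^ (1 / q) ≤ 2 ^ (1 / q - 1) * (A + B) := by
  have hq' : (1:ℝ) ≤ 1 / q := one_le_one_div hq hq1
  lift A to NNReal using hA
  lift B to NNReal using hB
  have h := NNReal.rpow_add_le_mul_rpow_add_rpow (A ^ q) (B ^ q) hq'
  rw [← NNReal.rpow_mul A, ← NNReal.rpow_mul B, mul_one_div_cancel hq.ne', NNReal.rpow_one,
    NNReal.rpow_one] at h
  exact_mod_cast h

/-- A pointwise sum of `L`-Lipschitz maps with pairwise disjoint supports from a
`p`-normed space into a `q`-normed space is well defined and `L·2^{1/q-1}`-Lipschitz. -/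
theorem stmt_3
    (p q : ℝ) (hp : 0 < p) (hp1 : p ≤ 1) (hq : 0 < q) (hq1 : q ≤ 1)
    (X : Type*) [AddCommGroup X] [Module ℝ X]
    (nX : X → ℝ)
    (hXnn : ∀ v, 0 ≤ nX v)
    (hXeq : ∀ v, nX v = 0 ↔ v = 0)
    (hXhom : ∀ (c : ℝ) v, nX (c • v) = |c| * nX v)
    (hXtri : ∀ v w, nX (v + w) ^ p ≤ nX v ^ p + nX w ^ p)
    (Y : Type*) [AddCommGroup Y] [Module ℝ Y]
    (nY : Y → ℝ)
    (hYnn : ∀ v, 0 ≤ nY v)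
    (hYeq : ∀ v, nY v = 0 ↔ v = 0)
    (hYhom : ∀ (c : ℝ) v, nY (c • v) = |c| * nY v)
    (hYtri : ∀ v w, nY (v + w) ^ q ≤ nY v ^ q + nY w ^ q)
    (Γ : Type*) (f : Γ → X → Y) (L : ℝ) (hL : 0 ≤ L)
    (hLip : ∀ γ x x', nY (f γ x - f γ x') ≤ L * nX (x - x'))
    (hdisj : ∀ γ γ', γ ≠ γ' → ∀ x, f γ x = 0 ∨ f γ' x = 0) :
    ∃ F : X → Y,
      (∀ x γ, f γ x ≠ 0 → F x = f γ x) ∧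
      (∀ x, (∀ γ, f γ x = 0) → F x = 0) ∧
      (∀ x x', nY (F x - F x') ≤ L * (2 : ℝ) ^ (1 / q - 1) * nX (x - x')) := by
  classical
  have hq' : (1:ℝ) ≤ 1 / q := one_le_one_div hq hq1
  have h2pos : (0:ℝ) < 2 ^ (1 / q - 1) := Real.rpow_pos_of_pos (by norm_num) _
  have h2one : (1:ℝ) ≤ 2 ^ (1 / q - 1) := by
    calc (1:ℝ) = 2 ^ (0:ℝ) := (Real.rpow_zero 2).symm
    _ ≤ 2 ^ (1 / q - 1) := Real.rpow_le_rpow_of_exponent_le one_le_two (by linarith)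
  -- the quasi-triangle inequality for nY with constant 2^(1/q-1)
  have hkey : ∀ a b : Y, nY (a - b) ≤ 2 ^ (1 / q - 1) * (nY a + nY b) := by
    intro a b
    have hnb : nY (-b) = nY b := by
      have := hYhom (-1) b
      simpa using this
    have h1 : nY (a - b) ^ q ≤ nY a ^ q + nY b ^ q := by
      have := hYtri a (-b)
      rwa [hnb, ← sub_eq_add_neg] at this
    have h2 : nY (a - b) = (nY (a - b) ^ q) ^ (1 / q) := by
      rw [← Real.rpow_mul (hYnn _), mul_one_div_cancel hq.ne', Real.rpow_one]
    calc nY (a - b) = (nY (a - b) ^ q) ^ (1 / q) := h2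
      _ ≤ (nY a ^ q + nY b ^ q) ^ (1 / q) :=
          Real.rpow_le_rpow (Real.rpow_nonneg (hYnn _) _) h1 (by positivity)
      _ ≤ 2 ^ (1 / q - 1) * (nY a + nY b) := aux_pm q hq hq1 (hYnn a) (hYnn b)
  set F : X → Y := fun x => if h : ∃ γ, f γ x ≠ 0 then f h.choose x else 0 with hF
  have hFspec : ∀ x γ, f γ x ≠ 0 → F x = f γ x := by
    intro x γ hγ
    have hex : ∃ γ, f γ x ≠ 0 := ⟨γ, hγ⟩
    have h0 := hex.choose_spec
    have heq : hex.choose = γ := by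
      by_contra hne
      rcases hdisj _ _ hne x with h | h
      · exact h0 h
      · exact hγ h
    simp only [hF, dif_pos hex, heq]
  have hFzero : ∀ x, (∀ γ, f γ x = 0) → F x = 0 := by
    intro x h
    have hnex : ¬ ∃ γ, f γ x ≠ 0 := by push_neg; exact h
    simp only [hF, dif_neg hnex]
  refine ⟨F, hFspec, hFzero, ?_⟩
  intro x x'
  set d := nX (x - x') with hd
  have hd0 : 0 ≤ d := hXnn _
  have hRHS : 0 ≤ L * 2 ^ (1 / q - 1) * d := by positivity
  have hdsymm : nX (x' - x) = d := by
    have := hXhom (-1) (x - x')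
    simpa [neg_sub] using this
  by_cases hx : ∃ γ, f γ x ≠ 0
  · by_cases hx' : ∃ γ', f γ' x' ≠ 0
    · obtain ⟨γ, hγ⟩ := hx
      obtain ⟨γ', hγ'⟩ := hx'
      rw [hFspec x γ hγ, hFspec x' γ' hγ']
      by_cases hgg : γ = γ'
      · subst hgg
        calc nY (f γ x - f γ x') ≤ L * d := hLip γ x x'
          _ = L * 1 * d := by ring
          _ ≤ L * 2 ^ (1 / q - 1) * d := by
              apply mul_le_mul_of_nonneg_right _ hd0
              exact mul_le_mul_of_nonneg_left h2one hL
      · -- the interesting case: different supports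
        have hfγx' : f γ x' = 0 := (hdisj γ γ' hgg x').resolve_right hγ'
        have hfγ'x : f γ' x = 0 := (hdisj γ' γ (Ne.symm hgg) x).resolve_right hγ
        have hLd0 : 0 < L * d := by
          rcases (mul_nonneg hL hd0).eq_or_lt with h | h
          · exfalso
            have : nY (f γ x) ≤ L * d := by simpa [hfγx'] using hLip γ x x'
            have h0 : nY (f γ x) = 0 := le_antisymm (by linarith [this, h.symm ▸ le_refl (0:ℝ)]) (hYnn _)
            exact hγ ((hYeq _).mp h0)
          · exact h
        set g : ℝ → X := fun t => x + t • (x' - x) with hg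
        have hgxd : ∀ t : ℝ, 0 ≤ t → nX (x - g t) = t * d := by
          intro t ht
          have hxg : x - g t = (-t) • (x' - x) := by
            simp only [hg, neg_smul]
            abel
          rw [hxg, hXhom, abs_neg, abs_of_nonneg ht, hdsymm]
        have hgx'd : ∀ t : ℝ, t ≤ 1 → nX (x' - g t) = (1 - t) * d := by
          intro t ht
          have hxg : x' - g t = (1 - t) • (x' - x) := by
            rw [sub_smul, one_smul, hg]
            simp only [smul_sub]
            abel
          rw [hxg, hXhom, abs_of_nonneg (by linarith), hdsymm]
        set S : Set ℝ := {t : ℝ | t ∈ Set.Icc (0:ℝ) 1 ∧ f γ (g t) ≠ 0} with hS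
        have hS0 : (0:ℝ) ∈ S := by
          constructor
          · exact ⟨le_refl 0, zero_le_one⟩
          · simpa [hg] using hγ
        have hSbdd : BddAbove S := ⟨1, fun t ht => ht.1.2⟩
        set c := sSup S with hc
        have hc0 : 0 ≤ c := le_csSup hSbdd hS0
        have hc1 : c ≤ 1 := csSup_le ⟨0, hS0⟩ (fun t ht => ht.1.2)
        -- for t > c in [0,1] the map f γ vanishes at g t
        have h1 : ∀ t : ℝ, c < t → t ≤ 1 → nY (f γ x) ≤ L * (t * d) := by
          intro t htc ht1
          have hzero : f γ (g t) = 0 := by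
            by_contra hne
            have : t ∈ S := ⟨⟨le_of_lt (lt_of_le_of_lt hc0 htc), ht1⟩, hne⟩
            exact absurd (le_csSup hSbdd this) (not_le.mpr htc)
          have := hLip γ x (g t)
          rwa [hzero, sub_zero, hgxd t (le_of_lt (lt_of_le_of_lt hc0 htc))] at this
        have hA : nY (f γ x) ≤ L * (c * d) := by
          rcases eq_or_lt_of_le hc1 with hce | hclt
          · have : nY (f γ x) ≤ L * d := by simpa [hfγx'] using hLip γ x x'
            rw [hce]; linarith
          · apply le_of_forall_pos_le_add
            intro ε hε
            set t := min 1 (c + ε / (L * d)) with ht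
            have ht1 : t ≤ 1 := min_le_left _ _
            have htc : c < t := lt_min hclt (lt_add_of_pos_right c (div_pos hε hLd0))
            have htle : t ≤ c + ε / (L * d) := min_le_right _ _
            calc nY (f γ x) ≤ L * (t * d) := h1 t htc ht1
              _ ≤ L * ((c + ε / (L * d)) * d) := by
                  apply mul_le_mul_of_nonneg_left _ hL
                  exact mul_le_mul_of_nonneg_right htle hd0
              _ = L * (c * d) + (L * d) * (ε / (L * d)) := by ring
              _ = L * (c * d) + ε := by rw [mul_div_cancel₀ _ hLd0.ne']
        have hB : nY (f γ' x') ≤ L * ((1 - c) * d) := by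
          set v := nY (f γ' x') with hv
          have hub : ∀ t ∈ S, t ≤ 1 - v / (L * d) := by
            intro t ht
            have hγ'gt : f γ' (g t) = 0 := (hdisj γ' γ (Ne.symm hgg) (g t)).resolve_right ht.2
            have hb := hLip γ' x' (g t)
            rw [hγ'gt, sub_zero, hgx'd t ht.1.2] at hb
            have hb' : v ≤ (1 - t) * (L * d) := by rw [hv]; nlinarith
            have := (div_le_iff₀ hLd0).mpr hb'
            linarith
          have hcle : c ≤ 1 - v / (L * d) := csSup_le ⟨0, hS0⟩ hub
          have : v / (L * d) ≤ 1 - c := by linarith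
          have := (div_le_iff₀ hLd0).mp this
          nlinarith
        calc nY (f γ x - f γ' x') ≤ 2 ^ (1 / q - 1) * (nY (f γ x) + nY (f γ' x')) := hkey _ _
          _ ≤ 2 ^ (1 / q - 1) * (L * (c * d) + L * ((1 - c) * d)) := by
              apply mul_le_mul_of_nonneg_left _ (le_of_lt h2pos)
              exact add_le_add hA hB
          _ = L * 2 ^ (1 / q - 1) * d := by ring
    · obtain ⟨γ, hγ⟩ := hx
      push_neg at hx'
      rw [hFspec x γ hγ, hFzero x' hx']
      have : nY (f γ x - 0) ≤ L * d := by simpa [hx' γ] using hLip γ x x'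
      calc nY (f γ x - 0) ≤ L * d := this
        _ = L * 1 * d := by ring
        _ ≤ L * 2 ^ (1 / q - 1) * d := by
            apply mul_le_mul_of_nonneg_right _ hd0
            exact mul_le_mul_of_nonneg_left h2one hL
  · push_neg at hx
    rw [hFzero x hx]
    by_cases hx' : ∃ γ', f γ' x' ≠ 0
    · obtain ⟨γ', hγ'⟩ := hx'
      rw [hFspec x' γ' hγ']
      have : nY (0 - f γ' x') ≤ L * d := by simpa [hx γ'] using hLip γ' x x'
      calc nY (0 - f γ' x') ≤ L * d := this
        _ = L * 1 * d := by ring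
        _ ≤ L * 2 ^ (1 / q - 1) * d := by
            apply mul_le_mul_of_nonneg_right _ hd0
            exact mul_le_mul_of_nonneg_left h2one hL
    · push_neg at hx'
      rw [hFzero x' hx']
      have : nY (0 - 0) = 0 := by
        rw [sub_zero]; exact (hYeq 0).mpr rfl
      rw [this]; exact hRHS
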